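/- Let Z be integrable with continuous strictly increasing distribution function F and quantile function Q, and α ∈ (0,1). Then CVaR_α(Z) = (1−α)⁻¹ · min_{ξ ∈ ℝ} E[ρ_α(Z − ξ)] + E[Z] (the Bassett–Koenker–Kordas representation of expected shortfall). -/

import Mathlib

open MeasureTheory

lemma rho_rewrite (α u : ℝ) :
    α * max u 0 + (1 - α) * max (-u) 0 = α * u + max (-u) 0 := by
  rcases le_total u 0 with h | h
  · rw [max_eq_right h, max_eq_left (by linarith)]; ring
  · rw [max_eq_left h, max_eq_right (by linarith)]; ring

/-- Bassett–Koenker–Kordas representation of expected shortfall: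
CVaR_α(Z) = (1−α)⁻¹ · min_{ξ∈ℝ} E[ρ_α(Z − ξ)] + E[Z]. -/
theorem cvar_koenker_representation {Ω : Type*} [MeasurableSpace Ω] (μ : Measure Ω)
    [IsProbabilityMeasure μ] (Z : Ω → ℝ) (hZm : Measurable Z) (hZ : Integrable Z μ)
    (F : ℝ → ℝ) (hF : F = fun z => (μ {ω | Z ω ≤ z}).toReal)
    (hFc : Continuous F)
    (hFm : StrictMonoOn F {z | 0 < F z ∧ F z < 1})
    (α : ℝ) (hα : α ∈ Set.Ioo (0:ℝ) 1) (q : ℝ) (hq : F q = α) :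
    (1 - α)⁻¹ * (∫ ω in {ω | Z ω > q}, Z ω ∂μ)
      = (1 - α)⁻¹ *
          (⨅ ξ : ℝ, ∫ ω, (α * max (Z ω - ξ) 0 + (1 - α) * max (-(Z ω - ξ)) 0) ∂μ)
        + ∫ ω, Z ω ∂μ := by
  have hα0 := hα.1
  have hα1 : (0:ℝ) < 1 - α := by linarith [hα.2]
  set A : Set Ω := {ω | Z ω ≤ q} with hA_def
  have hA : MeasurableSet A := measurableSet_le hZm measurable_const
  have hμA : (μ A).toReal = α := by rw [hF] at hq; exact hq
  -- integrability of the check-loss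
  have hint : ∀ ξ : ℝ, Integrable
      (fun ω => α * max (Z ω - ξ) 0 + (1 - α) * max (-(Z ω - ξ)) 0) μ := by
    intro ξ
    have h1 : Integrable (fun ω => Z ω - ξ) μ := hZ.sub (integrable_const ξ)
    exact (h1.pos_part.const_mul α).add (h1.neg.pos_part.const_mul (1 - α))
  -- the indicator of A is integrable
  have hindint : Integrable (A.indicator (fun _ => (1:ℝ))) μ :=
    (integrable_const (1:ℝ)).indicator hA
  have hindval : ∫ ω, A.indicator (fun _ => (1:ℝ)) ω ∂μ = α := by
    rw [integral_indicator hA, setIntegral_const, smul_eq_mul, mul_one, measureReal_def, hμA]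
  -- value at q
  have hmaxq : ∀ ω, max (-(Z ω - q)) 0 = A.indicator (fun ω => q - Z ω) ω := by
    intro ω
    by_cases h : Z ω ≤ q
    · rw [Set.indicator_of_mem (show ω ∈ A from h), max_eq_left (by linarith)]; ring
    · rw [Set.indicator_of_notMem (show ω ∉ A from h),
        max_eq_right (by push_neg at h; linarith)]
  have hAZ : Integrable (A.indicator (fun ω => q - Z ω)) μ :=
    ((integrable_const q).sub hZ).indicator hA
  have hIq : ∫ ω, (α * max (Z ω - q) 0 + (1 - α) * max (-(Z ω - q)) 0) ∂μ
      = (∫ ω in Aᶜ, Z ω ∂μ) - (1 - α) * ∫ ω, Z ω ∂μ := by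
    have step1 : ∫ ω, (α * max (Z ω - q) 0 + (1 - α) * max (-(Z ω - q)) 0) ∂μ
        = ∫ ω, (α * (Z ω - q) + A.indicator (fun ω => q - Z ω) ω) ∂μ := by
      apply integral_congr_ae
      filter_upwards with ω
      rw [rho_rewrite, hmaxq]
    have h1 : Integrable (fun ω => α * (Z ω - q)) μ :=
      (hZ.sub (integrable_const q)).const_mul α
    have h2 : Integrable (fun ω => Z ω - q) μ := hZ.sub (integrable_const q)
    rw [step1, integral_add h1 hAZ,
      show (∫ ω, α * (Z ω - q) ∂μ) = α * ∫ ω, (Z ω - q) ∂μ from integral_const_mul α _,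
      integral_sub hZ (integrable_const q),
      integral_const, integral_indicator hA,
      integral_sub (integrableOn_const (C := q) (measure_ne_top μ A)) hZ.integrableOn,
      setIntegral_const]
    have hsplit : (∫ ω in A, Z ω ∂μ) + ∫ ω in Aᶜ, Z ω ∂μ = ∫ ω, Z ω ∂μ :=
      integral_add_compl hA hZ
    have hone : (μ Set.univ).toReal = 1 := by simp
    simp only [smul_eq_mul, measureReal_def, hμA, hone]
    linarith
  -- q minimizes
  have hmin : ∀ ξ : ℝ,
      (∫ ω, (α * max (Z ω - q) 0 + (1 - α) * max (-(Z ω - q)) 0) ∂μ)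
      ≤ ∫ ω, (α * max (Z ω - ξ) 0 + (1 - α) * max (-(Z ω - ξ)) 0) ∂μ := by
    intro ξ
    set G : Ω → ℝ := fun ω =>
      (α * max (Z ω - q) 0 + (1 - α) * max (-(Z ω - q)) 0)
        + ((ξ - q) * A.indicator (fun _ => (1:ℝ)) ω - α * (ξ - q)) with hG_def
    have hGint : Integrable G μ :=
      (hint q).add ((hindint.const_mul (ξ - q)).sub (integrable_const (α * (ξ - q))))
    have hGle : ∀ ω, G ω ≤ α * max (Z ω - ξ) 0 + (1 - α) * max (-(Z ω - ξ)) 0 := by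
      intro ω
      simp only [hG_def]
      rw [rho_rewrite, rho_rewrite]
      by_cases h : Z ω ≤ q
      · rw [Set.indicator_of_mem (show ω ∈ A from h)]
        have h1 : max (-(Z ω - q)) 0 = -(Z ω - q) := max_eq_left (by linarith)
        have h2 : -(Z ω - ξ) ≤ max (-(Z ω - ξ)) 0 := le_max_left _ _
        rw [h1]; linarith
      · push_neg at h
        rw [Set.indicator_of_notMem (show ω ∉ A from not_le.2 h)]
        have h1 : max (-(Z ω - q)) 0 = 0 := max_eq_right (by linarith)
        have h2 : (0:ℝ) ≤ max (-(Z ω - ξ)) 0 := le_max_right _ _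
        rw [h1]; linarith
    have hGval : ∫ ω, G ω ∂μ
        = ∫ ω, (α * max (Z ω - q) 0 + (1 - α) * max (-(Z ω - q)) 0) ∂μ := by
      simp only [hG_def]
      have h3 : Integrable (fun ω => (ξ - q) * A.indicator (fun _ => (1:ℝ)) ω - α * (ξ - q)) μ :=
        (hindint.const_mul (ξ - q)).sub (integrable_const (α * (ξ - q)))
      have h4 : Integrable (fun ω => (ξ - q) * A.indicator (fun _ => (1:ℝ)) ω) μ :=
        hindint.const_mul (ξ - q)
      rw [integral_add (hint q) h3,
        integral_sub h4 (integrable_const (α * (ξ - q))),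
        show (∫ ω, (ξ - q) * A.indicator (fun _ => (1:ℝ)) ω ∂μ)
          = (ξ - q) * ∫ ω, A.indicator (fun _ => (1:ℝ)) ω ∂μ from integral_const_mul _ _,
        hindval, integral_const]
      simp only [measureReal_def, measure_univ, ENNReal.toReal_one, smul_eq_mul, one_mul]
      ring
    calc ∫ ω, (α * max (Z ω - q) 0 + (1 - α) * max (-(Z ω - q)) 0) ∂μ
        = ∫ ω, G ω ∂μ := hGval.symm
      _ ≤ _ := integral_mono hGint (hint ξ) hGle
  have hInf : (⨅ ξ : ℝ, ∫ ω, (α * max (Z ω - ξ) 0 + (1 - α) * max (-(Z ω - ξ)) 0) ∂μ)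
      = ∫ ω, (α * max (Z ω - q) 0 + (1 - α) * max (-(Z ω - q)) 0) ∂μ := by
    apply le_antisymm
    · exact ciInf_le ⟨_, by rintro _ ⟨ξ, rfl⟩; exact hmin ξ⟩ q
    · exact le_ciInf hmin
  have hset : {ω | Z ω > q} = Aᶜ := by
    ext ω; simp [hA_def, not_le]
  rw [hset, hInf, hIq]
  field_simp
  ring
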